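/- Let f, g : (0,∞) → ℝ be convex with f(1) = g(1) = 0. Suppose g(t) → ∞ as t → 0+, and let γ₀ := limsup_{t→0+} g(t)/f(t), the limit superior taken in the extended reals. Then for every real γ < γ₀ the supremum of D_g(P,Q) − γ·D_f(P,Q) over two-point distributions is infinite: for every M ∈ ℝ there exist p, q ∈ (0,1) such that, with P = (p, 1−p) and Q = (q, 1−q), one has D_g(P,Q) − γ·D_f(P,Q) > M. -/

import Mathlib

open Finset Filter Topology

/-- The `f`-divergence of the two-point distributions `P = (p, 1-p)` and `Q = (q, 1-q)`. -/
noncomputable def fDiv2 (f : ℝ → ℝ) (p q : ℝ) : ℝ :=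
  q * f (p / q) + (1 - q) * f ((1 - p) / (1 - q))

/-- If `g(t) → ∞` as `t → 0+` and `γ` is below `γ₀ = limsup_{t→0+} g(t)/f(t)`, then
`D_g − γ·D_f` is unbounded above over two-point distributions. -/
lemma convex_lower_bound (f : ℝ → ℝ) (hf : ConvexOn ℝ (Set.Ioi 0) f) (hf1 : f 1 = 0)
    {t : ℝ} (ht : t ∈ Set.Ioo (0:ℝ) 1) : f t ≥ -|f 2| := by
  obtain ⟨ht0, ht1⟩ := ht
  have h2t : (0:ℝ) < 2 - t := by linarith
  have h2 : (2:ℝ) ∈ Set.Ioi (0:ℝ) := by norm_num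
  have hts : t ∈ Set.Ioi (0:ℝ) := ht0
  have ha : (0:ℝ) < 1 / (2 - t) := by positivity
  have hb : (0:ℝ) ≤ (1 - t) / (2 - t) := by
    apply div_nonneg <;> linarith
  have hab : 1 / (2 - t) + (1 - t) / (2 - t) = 1 := by
    field_simp; ring
  have hcomb := hf.2 hts h2 (le_of_lt ha) hb hab
  have hpt : (1 / (2 - t)) • t + ((1 - t) / (2 - t)) • (2:ℝ) = 1 := by
    simp only [smul_eq_mul]
    field_simp; ring
  rw [hpt, hf1] at hcomb
  simp only [smul_eq_mul] at hcomb
  have key : (2 - t) * (1 / (2 - t) * f t + (1 - t) / (2 - t) * f 2) = f t + (1 - t) * f 2 := by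
    field_simp
  have h3 := mul_nonneg h2t.le hcomb
  rw [key] at h3
  nlinarith [le_abs_self (f 2), abs_nonneg (f 2),
    mul_le_mul_of_nonneg_left (le_abs_self (f 2)) (show (0:ℝ) ≤ 1 - t by linarith),
    mul_nonneg ht0.le (abs_nonneg (f 2))]

lemma exists_large (f g : ℝ → ℝ)
    (hf : ConvexOn ℝ (Set.Ioi 0) f) (hf1 : f 1 = 0)
    (hg0 : Tendsto g (𝓝[>] (0:ℝ)) atTop)
    (γ : ℝ)
    (hγ : (γ : EReal) < limsup (fun t => ((g t / f t : ℝ) : EReal)) (𝓝[>] (0:ℝ)))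
    (A : ℝ) : ∃ t ∈ Set.Ioo (0:ℝ) (1/2), g t - γ * f t > A := by
  obtain ⟨γ', hγγ', hγ'L⟩ := EReal.exists_between_coe_real hγ
  have hγγ : γ < γ' := by exact_mod_cast hγγ'
  have hfreq : ∃ᶠ t in 𝓝[>](0:ℝ), γ' < g t / f t := by
    have := Filter.frequently_lt_of_lt_limsup (by isBoundedDefault) hγ'L
    exact this.mono fun t ht => by exact_mod_cast ht
  set ε : ℝ := 1/(2*(|γ|+1)) with hεdef
  have hε : 0 < ε := by positivity
  set c : ℝ := min (1/2) ((γ' - γ) * ε) with hcdef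
  have hc : 0 < c := lt_min (by norm_num) (mul_pos (by linarith) hε)
  set B : ℝ := |f 2| with hBdef
  have hB : 0 ≤ B := abs_nonneg _
  have hev1 : ∀ᶠ t in 𝓝[>](0:ℝ), (A + |γ| * B)/c < g t := hg0.eventually_gt_atTop _
  have hev0 : ∀ᶠ t in 𝓝[>](0:ℝ), (0:ℝ) ≤ g t := hg0.eventually_ge_atTop _
  have hev2 : ∀ᶠ t in 𝓝[>](0:ℝ), t ∈ Set.Ioo (0:ℝ) (1/2) :=
    Ioo_mem_nhdsGT_of_mem ⟨le_rfl, by norm_num⟩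
  obtain ⟨t, hgt, ⟨hglarge, hge0⟩, ht⟩ :=
    (hfreq.and_eventually ((hev1.and hev0).and hev2)).exists
  refine ⟨t, ht, ?_⟩
  have hBf : f t ≥ -B := convex_lower_bound f hf hf1 ⟨ht.1, by linarith [ht.2]⟩
  have hcg : A + |γ| * B < c * g t := by
    rw [div_lt_iff₀ hc] at hglarge; linarith [hglarge]
  have hmain : g t - γ * f t ≥ c * g t - |γ| * B := by
    by_cases hft : f t ≤ 0
    · have h1 : γ * f t ≤ |γ| * B := by
        calc γ * f t ≤ |γ * f t| := le_abs_self _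
          _ = |γ| * |f t| := abs_mul _ _
          _ ≤ |γ| * B := by
              apply mul_le_mul_of_nonneg_left _ (abs_nonneg γ)
              rw [abs_le]; constructor <;> linarith
      have hc1 : c ≤ 1/2 := min_le_left _ _
      nlinarith [mul_nonneg (show (0:ℝ) ≤ 1 - c by linarith) hge0]
    · push_neg at hft
      have hg' : γ' * f t < g t := (lt_div_iff₀ hft).mp hgt
      by_cases hfe : ε * g t ≤ f t
      · have h2 : (γ' - γ) * (ε * g t) ≤ (γ' - γ) * f t :=
          mul_le_mul_of_nonneg_left hfe (by linarith)
        have h3 : c * g t ≤ (γ' - γ) * ε * g t :=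
          mul_le_mul_of_nonneg_right (min_le_right _ _) hge0
        nlinarith [mul_nonneg (abs_nonneg γ) hB]
      · push_neg at hfe
        have h4 : γ * f t ≤ |γ| * f t := mul_le_mul_of_nonneg_right (le_abs_self γ) hft.le
        have h5 : |γ| * f t ≤ |γ| * (ε * g t) := mul_le_mul_of_nonneg_left hfe.le (abs_nonneg γ)
        have h6 : |γ| * ε ≤ 1/2 := by
          have hγ0 := abs_nonneg γ
          rw [hεdef, mul_one_div, div_le_div_iff₀ (by positivity) (by norm_num : (0:ℝ) < 2)]
          nlinarith
        have h7 : |γ| * ε * g t ≤ (1/2) * g t :=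
          mul_le_mul_of_nonneg_right h6 hge0
        have hc1 : c ≤ 1/2 := min_le_left _ _
        nlinarith [mul_nonneg (abs_nonneg γ) hB,
          mul_le_mul_of_nonneg_right hc1 hge0]
  linarith

theorem sup_g_sub_gamma_f_eq_top_of_limsup_zero (f g : ℝ → ℝ)
    (hf : ConvexOn ℝ (Set.Ioi 0) f) (hg : ConvexOn ℝ (Set.Ioi 0) g)
    (hf1 : f 1 = 0) (hg1 : g 1 = 0)
    (hg0 : Tendsto g (𝓝[>] (0:ℝ)) atTop)
    (γ : ℝ)
    (hγ : (γ : EReal) < limsup (fun t => ((g t / f t : ℝ) : EReal)) (𝓝[>] (0:ℝ))) :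
    ∀ M : ℝ, ∃ p q : ℝ, p ∈ Set.Ioo (0:ℝ) 1 ∧ q ∈ Set.Ioo (0:ℝ) 1 ∧
      fDiv2 g p q - γ * fDiv2 f p q > M := by
  intro M
  have h1mem : (1:ℝ) ∈ Set.Ioi (0:ℝ) := by norm_num
  have hfa : ContinuousAt f 1 :=
    (hf.continuousOn isOpen_Ioi).continuousAt (isOpen_Ioi.mem_nhds h1mem)
  have hga : ContinuousAt g 1 :=
    (hg.continuousOn isOpen_Ioi).continuousAt (isOpen_Ioi.mem_nhds h1mem)
  have htd : Tendsto (fun u => g u - γ * f u) (𝓝 1) (𝓝 0) := by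
    have hh : ContinuousAt (fun u => g u - γ * f u) 1 :=
      hga.sub (continuousAt_const.mul hfa)
    simpa [ContinuousAt, hg1, hf1] using hh
  have hball := Metric.tendsto_nhds.mp htd 1 one_pos
  simp only [Real.dist_eq, sub_zero] at hball
  obtain ⟨δ, hδ0, hδ⟩ := Metric.eventually_nhds_iff.mp hball
  set q : ℝ := min (1/2) (δ/2) with hqdef
  have hq0 : 0 < q := lt_min (by norm_num) (by linarith)
  have hq1 : q ≤ 1/2 := min_le_left _ _
  have hqδ : 2 * q ≤ δ := by
    have := min_le_right (1/2 : ℝ) (δ/2); linarith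
  obtain ⟨t, ht, hK⟩ := exists_large f g hf hf1 hg0 γ hγ ((M+1)/q)
  obtain ⟨ht0, ht1⟩ := ht
  refine ⟨t * q, q, ⟨by positivity, by nlinarith⟩, ⟨hq0, by linarith⟩, ?_⟩
  have hq1' : (0:ℝ) < 1 - q := by linarith
  set u : ℝ := (1 - t * q) / (1 - q) with hudef
  have hu1 : 1 < u := by
    rw [hudef, lt_div_iff₀ hq1']
    nlinarith
  have huδ : u - 1 < δ := by
    rw [hudef]
    rw [div_sub' (ne_of_gt hq1'), div_lt_iff₀ hq1']
    nlinarith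
  have hhu : |g u - γ * f u| < 1 := by
    apply hδ
    rw [Real.dist_eq, abs_of_pos (by linarith : (0:ℝ) < u - 1)]
    exact huδ
  have hpq : t * q / q = t := by field_simp
  have hexp : fDiv2 g (t * q) q - γ * fDiv2 f (t * q) q
      = q * (g t - γ * f t) + (1 - q) * (g u - γ * f u) := by
    simp only [fDiv2, hpq, hudef]
    ring
  rw [hexp]
  have h1 : q * (g t - γ * f t) > M + 1 := by
    have := mul_lt_mul_of_pos_left hK hq0
    rwa [mul_div_cancel₀ _ (ne_of_gt hq0)] at this
  have h2 : (1 - q) * (g u - γ * f u) ≥ -1 := by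
    have := abs_lt.mp hhu
    nlinarith
  linarith
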